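/- Signals propagate at speed at most one: for any configuration c and any sequence of updates w ∈ {H,V}^t, if a cell x is a signal (state ≥ 4) in F(c,w,t) (the configuration after applying the updates w(1),...,w(t) in order), then there exists a cell y with c(y) ≥ 4 whose distance to x satisfies |x₁ - y₁| ≤ |w|_H and |x₂ - y₂| ≤ |w|_V, where |w|_H and |w|_V count the occurrences of H and V in w. -/
import Mathlib


inductive Letter | H | V
deriving DecidableEq, BEq

/-- Horizontal neighborhood `N_h(x) = {x, x+(1,0), x-(1,0)}`. -/
def Nh (x : ℤ × ℤ) : Finset (ℤ × ℤ) := {x, x + (1, 0), x - (1, 0)}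

/-- Vertical neighborhood `N_v(x) = {x, x+(0,1), x-(0,1)}`. -/
def Nv (x : ℤ × ℤ) : Finset (ℤ × ℤ) := {x, x + (0, 1), x - (0, 1)}

/-- The horizontal update of the fungal automaton. -/
def upH (c : ℤ × ℤ → ℤ) (x : ℤ × ℤ) : ℤ :=
  c x - 2 * (if 4 ≤ c x then 1 else 0) + ∑ y ∈ Nh x, (if 4 ≤ c y then 1 else 0)

/-- The vertical update of the fungal automaton. -/
def upV (c : ℤ × ℤ → ℤ) (x : ℤ × ℤ) : ℤ :=
  c x - 2 * (if 4 ≤ c x then 1 else 0) + ∑ y ∈ Nv x, (if 4 ≤ c y then 1 else 0)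

/-- One update step, prescribed by a letter. -/
def applyL (c : ℤ × ℤ → ℤ) (L : Letter) : ℤ × ℤ → ℤ :=
  match L with
  | .H => upH c
  | .V => upV c

/-- Iterated application of the updates prescribed by a word `w`. -/
def runW (c : ℤ × ℤ → ℤ) (w : List Letter) : ℤ × ℤ → ℤ :=
  w.foldl applyL c

lemma upH_sig (c : ℤ × ℤ → ℤ) (x : ℤ × ℤ) (hx : 4 ≤ upH c x) :
    ∃ y ∈ Nh x, 4 ≤ c y := by
  by_contra h
  push_neg at h
  have hs : ∑ y ∈ Nh x, (if 4 ≤ c y then (1:ℤ) else 0) = 0 :=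
    Finset.sum_eq_zero fun y hy => by simp [not_le.mpr (h y hy)]
  have hxm : x ∈ Nh x := by simp [Nh]
  have hcx := h x hxm
  rw [upH, hs, if_neg (not_le.mpr hcx)] at hx
  omega

lemma upV_sig (c : ℤ × ℤ → ℤ) (x : ℤ × ℤ) (hx : 4 ≤ upV c x) :
    ∃ y ∈ Nv x, 4 ≤ c y := by
  by_contra h
  push_neg at h
  have hs : ∑ y ∈ Nv x, (if 4 ≤ c y then (1:ℤ) else 0) = 0 :=
    Finset.sum_eq_zero fun y hy => by simp [not_le.mpr (h y hy)]
  have hxm : x ∈ Nv x := by simp [Nv]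
  have hcx := h x hxm
  rw [upV, hs, if_neg (not_le.mpr hcx)] at hx
  omega

lemma Nh_coord {x y : ℤ × ℤ} (h : y ∈ Nh x) : |x.1 - y.1| ≤ 1 ∧ x.2 = y.2 := by
  simp only [Nh, Finset.mem_insert, Finset.mem_singleton] at h
  rcases h with h | h | h <;> subst h <;>
    constructor <;> simp [Prod.fst_add, Prod.snd_add, Prod.fst_sub, Prod.snd_sub, abs_le] <;>
    omega

lemma Nv_coord {x y : ℤ × ℤ} (h : y ∈ Nv x) : x.1 = y.1 ∧ |x.2 - y.2| ≤ 1 := by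
  simp only [Nv, Finset.mem_insert, Finset.mem_singleton] at h
  rcases h with h | h | h <;> subst h <;>
    constructor <;> simp [Prod.fst_add, Prod.snd_add, Prod.fst_sub, Prod.snd_sub, abs_le] <;>
    omega

lemma stmt8_aux (c : ℤ × ℤ → ℤ) (w : List Letter) (x : ℤ × ℤ) (hx : 4 ≤ runW c w x) :
    ∃ y : ℤ × ℤ, 4 ≤ c y ∧
      |x.1 - y.1| ≤ (w.count Letter.H : ℤ) ∧
      |x.2 - y.2| ≤ (w.count Letter.V : ℤ) := by
  induction w generalizing c x with
  | nil => exact ⟨x, hx, by simp, by simp⟩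
  | cons L w ih =>
    obtain ⟨y, hy, h1, h2⟩ := ih (applyL c L) x hx
    cases L with
    | H =>
      obtain ⟨z, hz, hcz⟩ := upH_sig c y hy
      obtain ⟨ha, hb⟩ := Nh_coord hz
      have e1 : ((Letter.H :: w).count Letter.H : ℤ) = (w.count Letter.H : ℤ) + 1 := by
        simp [List.count_cons]; rfl
      have e2 : ((Letter.H :: w).count Letter.V : ℤ) = (w.count Letter.V : ℤ) := by
        simp [List.count_cons]; rfl
      rw [abs_le] at h1 h2 ha
      refine ⟨z, hcz, ?_, ?_⟩
      · rw [e1, abs_le]; omega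
      · rw [e2, abs_le]; omega
    | V =>
      obtain ⟨z, hz, hcz⟩ := upV_sig c y hy
      obtain ⟨ha, hb⟩ := Nv_coord hz
      have e1 : ((Letter.V :: w).count Letter.H : ℤ) = (w.count Letter.H : ℤ) := by
        simp [List.count_cons]; rfl
      have e2 : ((Letter.V :: w).count Letter.V : ℤ) = (w.count Letter.V : ℤ) + 1 := by
        simp [List.count_cons]; rfl
      rw [abs_le] at h1 h2 hb
      refine ⟨z, hcz, ?_, ?_⟩
      · rw [e1, abs_le]; omega
      · rw [e2, abs_le]; omega

/-- Signals propagate at speed at most one. -/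
theorem stmt8 (c : ℤ × ℤ → ℤ) (hrange : ∀ x, 0 ≤ c x ∧ c x ≤ 5)
    (w : List Letter) (x : ℤ × ℤ) (hx : 4 ≤ runW c w x) :
    ∃ y : ℤ × ℤ, 4 ≤ c y ∧
      |x.1 - y.1| ≤ (w.count Letter.H : ℤ) ∧
      |x.2 - y.2| ≤ (w.count Letter.V : ℤ) := by
  exact stmt8_aux c w x hx
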